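/- Let A be a closed module homomorphism on a complete RN module X and {V(s) : s ≥ 0} a mild C-existence family for A. If for some z ∈ X the map s ↦ V(s)z is differentiable at s = s₀, then V(s₀)z ∈ D(A) and A V(s₀)z = (d/ds) V(s)z |_{s=s₀}. -/

import Mathlib

open MeasureTheory Filter Set
noncomputable section

/-- A random normed module (RN module) over ℝ with base `(Ω, F, P)`:
an `L⁰(F,ℝ)`-module `X` together with an `L⁰`-norm. The `L⁰(F,ℝ)`-scalar
multiplication is bundled as the field `smul`. -/
structure RNModuleStr {Ω : Type*} [MeasurableSpace Ω] (P : Measure Ω)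
    (X : Type*) [AddCommGroup X] where
  smul : (Ω →ₘ[P] ℝ) → X → X
  nrm : X → Ω →ₘ[P] ℝ
  one_smul' : ∀ x, smul 1 x = x
  mul_smul' : ∀ ξ η x, smul (ξ * η) x = smul ξ (smul η x)
  smul_add' : ∀ ξ x y, smul ξ (x + y) = smul ξ x + smul ξ y
  add_smul' : ∀ ξ η x, smul (ξ + η) x = smul ξ x + smul η x
  nrm_nonneg : ∀ x, 0 ≤ nrm x
  nrm_smul : ∀ ξ x, nrm (smul ξ x) = |ξ| * nrm x
  nrm_add_le : ∀ x y, nrm (x + y) ≤ nrm x + nrm y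
  nrm_eq_zero : ∀ x, nrm x = 0 → x = 0

namespace RNModuleStr

variable {Ω : Type*} [MeasurableSpace Ω] {P : Measure Ω} {X : Type*} [AddCommGroup X]

/-- Scalar multiplication by a real constant (viewed as a constant random variable). -/
def rsmul (M : RNModuleStr P X) (c : ℝ) (x : X) : X :=
  M.smul (AEEqFun.const Ω c) x

/-- Convergence in the `(ε,λ)`-topology of an RN module, i.e. convergence in
probability of the `L⁰`-norms of the differences, along an arbitrary filter. -/
def TendstoRN (M : RNModuleStr P X) {ι : Type*} (f : ι → X) (l : Filter ι) (x : X) : Prop :=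
  ∀ ε : ℝ, 0 < ε → Tendsto (fun i => P {ω : Ω | ε ≤ M.nrm (f i - x) ω}) l (nhds 0)

/-- Sequential continuity of a map between RN modules; in the metrizable
`(ε,λ)`-topology this is equivalent to continuity. -/
def RNContinuousMap {Y : Type*} [AddCommGroup Y] (M : RNModuleStr P X)
    (N : RNModuleStr P Y) (T : X → Y) : Prop :=
  ∀ (u : ℕ → X) (x : X), M.TendstoRN u atTop x → N.TendstoRN (fun n => T (u n)) atTop (T x)

/-- `T : X → Y` is a module homomorphism of `L⁰`-modules. -/
def IsModuleHom {Y : Type*} [AddCommGroup Y] (M : RNModuleStr P X)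
    (N : RNModuleStr P Y) (T : X → Y) : Prop :=
  (∀ x y : X, T (x + y) = T x + T y) ∧ ∀ (ξ : Ω →ₘ[P] ℝ) (x : X), T (M.smul ξ x) = N.smul ξ (T x)

/-- `T` is almost surely bounded: `‖Tz‖ ≤ η ‖z‖` for some `η ∈ L⁰₊`. -/
def ASBounded {Y : Type*} [AddCommGroup Y] (M : RNModuleStr P X)
    (N : RNModuleStr P Y) (T : X → Y) : Prop :=
  ∃ η : Ω →ₘ[P] ℝ, 0 ≤ η ∧ ∀ x : X, N.nrm (T x) ≤ η * M.nrm x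

/-- Riemann sum over the uniform partition of `[a,b]` into `n` pieces. -/
def rsum (M : RNModuleStr P X) (f : ℝ → X) (a b : ℝ) (n : ℕ) : X :=
  ∑ i ∈ Finset.range n, M.rsmul ((b - a) / n) (f (a + (b - a) * i / n))

/-- `y` is the Riemann integral `∫ₐᵇ f(u) du` in the complete RN module `X`
(limit in the `(ε,λ)`-topology of the uniform Riemann sums). -/
def IsIntegral (M : RNModuleStr P X) (f : ℝ → X) (a b : ℝ) (y : X) : Prop :=
  M.TendstoRN (fun n => M.rsum f a b n) atTop y

/-- The family `{V(s) : s ≥ 0}` is locally a.s. bounded: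
`⋁_{s∈[0,l]} ‖V(s)‖ ∈ L⁰₊(F)` for every `l > 0`. -/
def LocASBounded (M : RNModuleStr P X) (V : ℝ → X → X) : Prop :=
  ∀ l : ℝ, 0 < l → ∃ η : Ω →ₘ[P] ℝ, 0 ≤ η ∧
    ∀ s ∈ Icc (0:ℝ) l, ∀ x : X, M.nrm (V s x) ≤ η * M.nrm x

/-- `{V(s) : s ≥ 0}` is a `C`-semigroup on the RN module `X`. -/
structure IsCSemigroup (M : RNModuleStr P X) (V : ℝ → X → X) (C : X → X) : Prop where
  C_hom : M.IsModuleHom M C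
  C_bdd : ASBounded M M C
  C_inj : Function.Injective C
  V_hom : ∀ s : ℝ, 0 ≤ s → M.IsModuleHom M (V s)
  V_bdd : ∀ s : ℝ, 0 ≤ s → ASBounded M M (V s)
  strong_cont : ∀ (z : X) (t : ℝ), 0 ≤ t →
    M.TendstoRN (fun s => V s z) (nhdsWithin t (Ici 0)) (V t z)
  V_zero : V 0 = C
  C_V : ∀ s t : ℝ, 0 ≤ s → 0 ≤ t → ∀ z : X, C (V (s + t) z) = V s (V t z)

/-- `(A, DA)` is the generator of the `C`-semigroup `{V(s) : s ≥ 0}`: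
`DA = {z : lim_{s↓0} (V(s)z - Cz)/s exists and lies in R(C)}` and
`Az = C⁻¹ lim_{s↓0} (V(s)z - Cz)/s`. -/
structure IsGenerator (M : RNModuleStr P X) (V : ℝ → X → X) (C : X → X)
    (DA : Set X) (A : X → X) : Prop where
  mem_iff : ∀ z : X, z ∈ DA ↔ ∃ w : X,
    M.TendstoRN (fun s => M.rsmul s⁻¹ (V s z - C z)) (nhdsWithin 0 (Ioi 0)) (C w)
  spec : ∀ z ∈ DA,
    M.TendstoRN (fun s => M.rsmul s⁻¹ (V s z - C z)) (nhdsWithin 0 (Ioi 0)) (C (A z))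

/-- `{V(s) : s ≥ 0}` is a mild `C`-existence family for the module homomorphism
`A` with domain `DA`. -/
structure IsMildCExistenceFamily (M : RNModuleStr P X) (V : ℝ → X → X) (C : X → X)
    (DA : Set X) (A : X → X) : Prop where
  V_hom : ∀ s : ℝ, 0 ≤ s → M.IsModuleHom M (V s)
  locBdd : M.LocASBounded V
  strong_cont : ∀ (z : X) (t : ℝ), 0 ≤ t →
    M.TendstoRN (fun s => V s z) (nhdsWithin t (Ici 0)) (V t z)
  integral_mem : ∀ (z : X) (s : ℝ), 0 ≤ s → ∃ y : X,
    M.IsIntegral (fun u => V u z) 0 s y ∧ y ∈ DA ∧ A y = V s z - C z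

/-- `A` (with domain `DA`) is a closed module homomorphism: its graph is closed
in the `(ε,λ)`-topology. -/
def IsClosedOperator (M : RNModuleStr P X) (DA : Set X) (A : X → X) : Prop :=
  ∀ (u : ℕ → X) (z y : X), (∀ n, u n ∈ DA) →
    M.TendstoRN u atTop z → M.TendstoRN (fun n => A (u n)) atTop y →
    z ∈ DA ∧ A z = y

end RNModuleStr

open RNModuleStr

namespace RNModuleStr

variable {Ω : Type*} [MeasurableSpace Ω] {P : Measure Ω} {X : Type*} [AddCommGroup X]
  (M : RNModuleStr P X)

/-! ### Basic algebraic lemmas -/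

lemma smul_zero'' (ξ : Ω →ₘ[P] ℝ) : M.smul ξ (0 : X) = 0 := by
  have h := M.smul_add' ξ 0 0
  rw [add_zero] at h
  exact (left_eq_add.mp h)

lemma zero_smul'' (x : X) : M.smul 0 x = 0 := by
  have h := M.add_smul' 0 0 x
  rw [add_zero] at h
  exact (left_eq_add.mp h)

lemma neg_smul'' (ξ : Ω →ₘ[P] ℝ) (x : X) : M.smul (-ξ) x = -(M.smul ξ x) := by
  have h := M.add_smul' ξ (-ξ) x
  rw [add_neg_cancel, M.zero_smul''] at h
  exact (eq_neg_of_add_eq_zero_right h.symm)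

lemma smul_neg'' (ξ : Ω →ₘ[P] ℝ) (x : X) : M.smul ξ (-x) = -(M.smul ξ x) := by
  have h := M.smul_add' ξ x (-x)
  rw [add_neg_cancel, M.smul_zero''] at h
  exact (eq_neg_of_add_eq_zero_right h.symm)

lemma smul_sub'' (ξ : Ω →ₘ[P] ℝ) (x y : X) :
    M.smul ξ (x - y) = M.smul ξ x - M.smul ξ y := by
  rw [sub_eq_add_neg, M.smul_add', M.smul_neg'', sub_eq_add_neg]

/-! ### Constant `AEEqFun` lemmas -/

lemma const_add' (a b : ℝ) :
    (AEEqFun.const Ω (a + b) : Ω →ₘ[P] ℝ) = AEEqFun.const Ω a + AEEqFun.const Ω b := by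
  apply AEEqFun.ext
  filter_upwards [AEEqFun.coeFn_add (AEEqFun.const Ω a : Ω →ₘ[P] ℝ) (AEEqFun.const Ω b),
    AEEqFun.coeFn_const (μ := P) Ω a, AEEqFun.coeFn_const (μ := P) Ω b,
    AEEqFun.coeFn_const (μ := P) Ω (a + b)] with ω h1 h2 h3 h4
  simp [h1, h2, h3, h4, Pi.add_apply]

lemma const_mul' (a b : ℝ) :
    (AEEqFun.const Ω (a * b) : Ω →ₘ[P] ℝ) = AEEqFun.const Ω a * AEEqFun.const Ω b := by
  apply AEEqFun.ext
  filter_upwards [AEEqFun.coeFn_mul (AEEqFun.const Ω a : Ω →ₘ[P] ℝ) (AEEqFun.const Ω b),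
    AEEqFun.coeFn_const (μ := P) Ω a, AEEqFun.coeFn_const (μ := P) Ω b,
    AEEqFun.coeFn_const (μ := P) Ω (a * b)] with ω h1 h2 h3 h4
  simp [h1, h2, h3, h4, Pi.mul_apply]

lemma const_neg' (a : ℝ) :
    (AEEqFun.const Ω (-a) : Ω →ₘ[P] ℝ) = -(AEEqFun.const Ω a : Ω →ₘ[P] ℝ) := by
  apply AEEqFun.ext
  filter_upwards [AEEqFun.coeFn_neg (AEEqFun.const Ω a : Ω →ₘ[P] ℝ),
    AEEqFun.coeFn_const (μ := P) Ω a, AEEqFun.coeFn_const (μ := P) Ω (-a)] with ω h1 h2 h3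
  simp [h1, h2, h3]

lemma const_zero' : (AEEqFun.const Ω (0:ℝ) : Ω →ₘ[P] ℝ) = 0 := rfl

lemma const_one' : (AEEqFun.const Ω (1:ℝ) : Ω →ₘ[P] ℝ) = 1 := rfl

lemma abs_const' (a : ℝ) :
    |(AEEqFun.const Ω a : Ω →ₘ[P] ℝ)| = AEEqFun.const Ω |a| := by
  apply AEEqFun.ext
  filter_upwards [AEEqFun.coeFn_abs (AEEqFun.const Ω a : Ω →ₘ[P] ℝ),
    AEEqFun.coeFn_const (μ := P) Ω a, AEEqFun.coeFn_const (μ := P) Ω |a|] with ω h1 h2 h3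
  simp [h1, h2, h3]

/-! ### `rsmul` lemmas -/

lemma rsmul_add'' (c : ℝ) (x y : X) : M.rsmul c (x + y) = M.rsmul c x + M.rsmul c y :=
  M.smul_add' _ x y

lemma rsmul_zero'' (c : ℝ) : M.rsmul c (0 : X) = 0 := M.smul_zero'' _

lemma zero_rsmul (x : X) : M.rsmul 0 x = 0 := by
  rw [rsmul, const_zero', M.zero_smul'']

lemma one_rsmul (x : X) : M.rsmul 1 x = x := by
  rw [rsmul, const_one', M.one_smul']

lemma neg_rsmul (c : ℝ) (x : X) : M.rsmul (-c) x = -(M.rsmul c x) := by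
  rw [rsmul, const_neg', M.neg_smul'']; rfl

lemma rsmul_neg'' (c : ℝ) (x : X) : M.rsmul c (-x) = -(M.rsmul c x) := M.smul_neg'' _ _

lemma rsmul_sub (c : ℝ) (x y : X) : M.rsmul c (x - y) = M.rsmul c x - M.rsmul c y :=
  M.smul_sub'' _ x y

lemma add_rsmul (a b : ℝ) (x : X) : M.rsmul (a + b) x = M.rsmul a x + M.rsmul b x := by
  rw [rsmul, const_add', M.add_smul']; rfl

lemma rsmul_rsmul (a b : ℝ) (x : X) : M.rsmul a (M.rsmul b x) = M.rsmul (a * b) x := by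
  rw [rsmul, rsmul, rsmul, const_mul', M.mul_smul']

lemma rsmul_sum {ι : Type*} (c : ℝ) (s : Finset ι) (f : ι → X) :
    M.rsmul c (∑ j ∈ s, f j) = ∑ j ∈ s, M.rsmul c (f j) := by
  classical
  induction s using Finset.induction_on with
  | empty => simp [M.rsmul_zero'']
  | insert _ _ h ih => rw [Finset.sum_insert h, Finset.sum_insert h, M.rsmul_add'', ih]

lemma rsmul_natCast (k : ℕ) (x : X) : M.rsmul (k : ℝ) x = k • x := by
  induction k with
  | zero => simp [M.zero_rsmul]
  | succ n ih =>
      rw [Nat.cast_succ, M.add_rsmul, ih, M.one_rsmul, succ_nsmul]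

lemma rsmul_inv_nsmul {k : ℕ} (hk : k ≠ 0) (x : X) :
    M.rsmul (1 / (k : ℝ)) ((k : ℕ) • x) = x := by
  rw [← M.rsmul_natCast, M.rsmul_rsmul, one_div,
    inv_mul_cancel₀ (Nat.cast_ne_zero.mpr hk), M.one_rsmul]

/-! ### `nrm` lemmas -/

lemma zero_mul' (g : Ω →ₘ[P] ℝ) : (0 : Ω →ₘ[P] ℝ) * g = 0 := by
  apply AEEqFun.ext
  filter_upwards [AEEqFun.coeFn_mul (0 : Ω →ₘ[P] ℝ) g,
    (AEEqFun.coeFn_zero : ⇑(0 : Ω →ₘ[P] ℝ) =ᵐ[P] 0)] with ω h1 h2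
  simp only [h1, Pi.mul_apply, h2, Pi.zero_apply, zero_mul]

lemma nrm_zero : M.nrm (0 : X) = 0 := by
  have h := M.nrm_smul 0 (0 : X)
  rw [M.zero_smul'', ← const_zero', abs_const', abs_zero, const_zero', zero_mul'] at h
  exact h

lemma nrm_neg (x : X) : M.nrm (-x) = M.nrm x := by
  have h1 : M.rsmul (-1 : ℝ) x = -x := by rw [M.neg_rsmul, M.one_rsmul]
  have h2 := M.nrm_smul (AEEqFun.const Ω (-1 : ℝ)) x
  rw [show M.smul (AEEqFun.const Ω (-1:ℝ)) x = M.rsmul (-1:ℝ) x from rfl, h1,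
    abs_const'] at h2
  norm_num at h2
  rw [h2, const_one', one_mul]

lemma nrm_sub_comm (x y : X) : M.nrm (x - y) = M.nrm (y - x) := by
  rw [show x - y = -(y - x) by abel, M.nrm_neg]

end RNModuleStr

namespace RNModuleStr

variable {Ω : Type*} [MeasurableSpace Ω] {P : Measure Ω} {X : Type*} [AddCommGroup X]
  (M : RNModuleStr P X)

/-! ### a.e. pointwise lemmas -/

lemma ae_nrm_nonneg (x : X) : ∀ᵐ ω ∂P, 0 ≤ (M.nrm x) ω := by
  filter_upwards [AEEqFun.coeFn_le.mpr (M.nrm_nonneg x),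
    (AEEqFun.coeFn_zero : ⇑(0 : Ω →ₘ[P] ℝ) =ᵐ[P] 0)] with ω h1 h2
  simpa [h2] using h1

lemma ae_nrm_add (x y : X) : ∀ᵐ ω ∂P, (M.nrm (x + y)) ω ≤ (M.nrm x) ω + (M.nrm y) ω := by
  filter_upwards [AEEqFun.coeFn_le.mpr (M.nrm_add_le x y),
    AEEqFun.coeFn_add (M.nrm x) (M.nrm y)] with ω h1 h2
  simpa [h2] using h1

lemma ae_nrm_rsmul (c : ℝ) (x : X) : ∀ᵐ ω ∂P, (M.nrm (M.rsmul c x)) ω = |c| * (M.nrm x) ω := by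
  have h : M.nrm (M.rsmul c x) = AEEqFun.const Ω |c| * M.nrm x := by
    rw [rsmul, M.nrm_smul, abs_const']
  rw [h]
  filter_upwards [AEEqFun.coeFn_mul (AEEqFun.const Ω |c| : Ω →ₘ[P] ℝ) (M.nrm x),
    AEEqFun.coeFn_const (μ := P) Ω |c|] with ω h1 h2
  simp [h1, h2]

lemma ae_nrm_sum {ι : Type*} (s : Finset ι) (f : ι → X) :
    ∀ᵐ ω ∂P, (M.nrm (∑ j ∈ s, f j)) ω ≤ ∑ j ∈ s, (M.nrm (f j)) ω := by
  classical
  induction s using Finset.induction_on with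
  | empty =>
      simp only [Finset.sum_empty]
      filter_upwards [(AEEqFun.coeFn_zero : ⇑(0 : Ω →ₘ[P] ℝ) =ᵐ[P] 0)] with ω h2
      rw [M.nrm_zero, h2]
      simp
  | @insert a s' h ih =>
      filter_upwards [ih, M.ae_nrm_add (f a) (∑ j ∈ s', f j)] with ω h1 h2
      rw [Finset.sum_insert h, Finset.sum_insert h]
      exact le_trans h2 (by linarith)

/-! ### measure estimates -/

lemma meas_add_le (x y : X) (ε₁ ε₂ : ℝ) :
    P {ω | ε₁ + ε₂ ≤ (M.nrm (x + y)) ω} ≤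
      P {ω | ε₁ ≤ (M.nrm x) ω} + P {ω | ε₂ ≤ (M.nrm y) ω} := by
  refine le_trans (measure_mono_ae ?_) (measure_union_le _ _)
  filter_upwards [M.ae_nrm_add x y] with ω h1 hω
  have hω' : ε₁ + ε₂ ≤ (M.nrm (x + y)) ω := hω
  by_cases hc : ε₁ ≤ (M.nrm x) ω
  · exact Or.inl hc
  · refine Or.inr ?_
    show ε₂ ≤ (M.nrm y) ω
    push_neg at hc
    linarith

/-! ### TendstoRN lemmas -/

lemma tendstoRN_const {ι : Type*} (l : Filter ι) (x : X) :
    M.TendstoRN (fun _ => x) l x := by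
  intro ε hε
  have h0 : ∀ i : ι, P {ω | ε ≤ (M.nrm ((fun _ => x) i - x)) ω} = 0 := by
    intro _
    simp only [sub_self]
    refine le_antisymm ?_ zero_le
    have hsub : {ω | ε ≤ (M.nrm (0 : X)) ω} ≤ᵐ[P] (∅ : Set Ω) := by
      filter_upwards [(AEEqFun.coeFn_zero : ⇑(0 : Ω →ₘ[P] ℝ) =ᵐ[P] 0)] with ω h2 hω
      have hω' : ε ≤ (M.nrm (0 : X)) ω := hω
      rw [M.nrm_zero, h2] at hω'
      simp only [Pi.zero_apply] at hω'
      linarith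
    calc P {ω | ε ≤ (M.nrm (0 : X)) ω} ≤ P (∅ : Set Ω) := measure_mono_ae hsub
      _ = 0 := measure_empty
  have hcon : Tendsto (fun _ : ι => (0 : ENNReal)) l (nhds 0) := tendsto_const_nhds
  exact Tendsto.congr (fun i => (h0 i).symm) hcon

lemma tendstoRN_congr {ι : Type*} {l : Filter ι} {f g : ι → X} {x : X}
    (h : ∀ᶠ i in l, f i = g i) (hf : M.TendstoRN f l x) : M.TendstoRN g l x := by
  intro ε hε
  refine (hf ε hε).congr' ?_
  filter_upwards [h] with i hi
  rw [hi]

lemma tendstoRN_comp {ι κ : Type*} {l : Filter ι} {l' : Filter κ} {f : ι → X} {x : X}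
    {φ : κ → ι} (hf : M.TendstoRN f l x) (hφ : Tendsto φ l' l) :
    M.TendstoRN (fun j => f (φ j)) l' x :=
  fun ε hε => (hf ε hε).comp hφ

lemma tendstoRN_add {ι : Type*} {l : Filter ι} {f g : ι → X} {x y : X}
    (hf : M.TendstoRN f l x) (hg : M.TendstoRN g l y) :
    M.TendstoRN (fun i => f i + g i) l (x + y) := by
  intro ε hε
  have key : ∀ i, P {ω | ε ≤ (M.nrm (f i + g i - (x + y))) ω} ≤
      P {ω | ε/2 ≤ (M.nrm (f i - x)) ω} + P {ω | ε/2 ≤ (M.nrm (g i - y)) ω} := by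
    intro i
    have h1 : f i + g i - (x + y) = (f i - x) + (g i - y) := by abel
    have h2 := M.meas_add_le (f i - x) (g i - y) (ε/2) (ε/2)
    rw [add_halves] at h2
    rw [h1]
    exact h2
  have hε2 : 0 < ε/2 := by positivity
  have h0 : Tendsto (fun i => P {ω | ε/2 ≤ (M.nrm (f i - x)) ω}
      + P {ω | ε/2 ≤ (M.nrm (g i - y)) ω}) l (nhds 0) := by
    simpa using (hf (ε/2) hε2).add (hg (ε/2) hε2)
  exact tendsto_of_tendsto_of_tendsto_of_le_of_le tendsto_const_nhds h0
    (fun i => zero_le) key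

lemma tendstoRN_neg {ι : Type*} {l : Filter ι} {f : ι → X} {x : X}
    (hf : M.TendstoRN f l x) : M.TendstoRN (fun i => -(f i)) l (-x) := by
  intro ε hε
  have h : ∀ i, M.nrm (-(f i) - -x) = M.nrm (f i - x) := fun i => by
    rw [show -(f i) - -x = -(f i - x) by abel, M.nrm_neg]
  simpa only [h] using hf ε hε

lemma tendstoRN_rsmul {ι : Type*} {l : Filter ι} {f : ι → X} {x : X} (c : ℝ)
    (hf : M.TendstoRN f l x) : M.TendstoRN (fun i => M.rsmul c (f i)) l (M.rsmul c x) := by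
  intro ε hε
  have hc : 0 < |c| + 1 := by positivity
  have key : ∀ i, P {ω | ε ≤ (M.nrm (M.rsmul c (f i) - M.rsmul c x)) ω} ≤
      P {ω | ε/(|c|+1) ≤ (M.nrm (f i - x)) ω} := by
    intro i
    rw [← M.rsmul_sub]
    refine measure_mono_ae ?_
    filter_upwards [M.ae_nrm_rsmul c (f i - x), M.ae_nrm_nonneg (f i - x)] with ω h1 h2 hω
    have hω' : ε ≤ (M.nrm (M.rsmul c (f i - x))) ω := hω
    rw [h1] at hω'
    show ε/(|c|+1) ≤ (M.nrm (f i - x)) ω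
    rw [div_le_iff₀ hc]
    nlinarith [abs_nonneg c]
  have h0 : Tendsto (fun i => P {ω | ε/(|c|+1) ≤ (M.nrm (f i - x)) ω}) l (nhds 0) :=
    hf (ε/(|c|+1)) (by positivity)
  exact tendsto_of_tendsto_of_tendsto_of_le_of_le tendsto_const_nhds h0
    (fun i => zero_le) key

lemma tendstoRN_unique {ι : Type*} {l : Filter ι} [l.NeBot] {f : ι → X} {x y : X}
    (hx : M.TendstoRN f l x) (hy : M.TendstoRN f l y) : x = y := by
  have hε : ∀ ε : ℝ, 0 < ε → P {ω | ε ≤ (M.nrm (x - y)) ω} = 0 := by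
    intro ε hε'
    have hε2 : 0 < ε/2 := by positivity
    have key : ∀ i, P {ω | ε ≤ (M.nrm (x - y)) ω} ≤
        P {ω | ε/2 ≤ (M.nrm (f i - x)) ω} + P {ω | ε/2 ≤ (M.nrm (f i - y)) ω} := by
      intro i
      have h1 : x - y = (x - f i) + (f i - y) := by abel
      have h2 := M.meas_add_le (x - f i) (f i - y) (ε/2) (ε/2)
      rw [add_halves] at h2
      rw [M.nrm_sub_comm x (f i)] at h2
      rw [h1]
      exact h2
    have h0 : Tendsto (fun i => P {ω | ε/2 ≤ (M.nrm (f i - x)) ω}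
        + P {ω | ε/2 ≤ (M.nrm (f i - y)) ω}) l (nhds 0) := by
      simpa using (hx (ε/2) hε2).add (hy (ε/2) hε2)
    exact le_antisymm (ge_of_tendsto h0 (Eventually.of_forall key)) zero_le
  have hpos : P {ω | 0 < (M.nrm (x - y)) ω} = 0 := by
    refine measure_mono_null ?_ (measure_iUnion_null (s := fun k : ℕ =>
      {ω | 1/((k:ℝ)+1) ≤ (M.nrm (x - y)) ω}) fun k => hε _ (by positivity))
    intro ω hω
    rw [Set.mem_setOf_eq] at hω
    obtain ⟨k, hk⟩ := exists_nat_one_div_lt hω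
    exact Set.mem_iUnion.mpr ⟨k, le_of_lt hk⟩
  have hle : ∀ᵐ ω ∂P, (M.nrm (x - y)) ω ≤ 0 := by
    rw [ae_iff]
    simpa using hpos
  have : M.nrm (x - y) = 0 := by
    apply AEEqFun.ext
    filter_upwards [hle, M.ae_nrm_nonneg (x - y),
      (AEEqFun.coeFn_zero : ⇑(0 : Ω →ₘ[P] ℝ) =ᵐ[P] 0)] with ω h1 h2 h3
    rw [h3]
    exact le_antisymm h1 h2
  have := M.nrm_eq_zero _ this
  rw [sub_eq_zero] at this
  exact this

lemma meas_le_of_tendstoRN {g : ℕ → X} {x y : X} (hg : M.TendstoRN g atTop x)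
    {ε₁ ε₂ : ℝ} (h2 : 0 < ε₂) {δ : ENNReal}
    (hδ : ∀ᶠ m in atTop, P {ω | ε₁ ≤ (M.nrm (g m - y)) ω} ≤ δ) :
    P {ω | ε₂ + ε₁ ≤ (M.nrm (x - y)) ω} ≤ δ := by
  have key : ∀ᶠ m in atTop, P {ω | ε₂ + ε₁ ≤ (M.nrm (x - y)) ω} ≤
      P {ω | ε₂ ≤ (M.nrm (g m - x)) ω} + δ := by
    filter_upwards [hδ] with m hm
    have h1 : x - y = (x - g m) + (g m - y) := by abel
    calc P {ω | ε₂ + ε₁ ≤ (M.nrm (x - y)) ω}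
        ≤ P {ω | ε₂ ≤ (M.nrm (x - g m)) ω} + P {ω | ε₁ ≤ (M.nrm (g m - y)) ω} := by
          rw [h1]; exact M.meas_add_le _ _ _ _
      _ ≤ P {ω | ε₂ ≤ (M.nrm (g m - x)) ω} + δ := by
          rw [M.nrm_sub_comm x (g m)]
          exact add_le_add le_rfl hm
  have h0 : Tendsto (fun m => P {ω | ε₂ ≤ (M.nrm (g m - x)) ω} + δ) atTop (nhds δ) := by
    simpa using (hg ε₂ h2).add (tendsto_const_nhds : Tendsto (fun _ : ℕ => δ) atTop _)
  exact ge_of_tendsto h0 key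

end RNModuleStr

namespace RNModuleStr

variable {Ω : Type*} [MeasurableSpace Ω] {P : Measure Ω} {X : Type*} [AddCommGroup X]
  (M : RNModuleStr P X)

/-! ### Riemann sum lemmas -/

lemma rsum_eq (f : ℝ → X) (st : ℝ) (N : ℕ) (hN : N ≠ 0) :
    M.rsum f 0 (st * N) N = ∑ i ∈ Finset.range N, M.rsmul st (f (st * i)) := by
  unfold rsum
  refine Finset.sum_congr rfl fun i _ => ?_
  have hN' : (N : ℝ) ≠ 0 := Nat.cast_ne_zero.mpr hN
  rw [sub_zero, zero_add]
  rw [show st * (N:ℝ) / N = st by field_simp]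
  rw [show st * (N:ℝ) * i / N = st * i by field_simp]

lemma rsum_zero_right (f : ℝ → X) (m : ℕ) : M.rsum f 0 0 m = 0 := by
  unfold rsum
  rw [Finset.sum_eq_zero]
  intro i _
  rw [sub_zero, zero_div, M.zero_rsmul]

lemma isIntegral_zero (f : ℝ → X) : M.IsIntegral f 0 0 0 := by
  have h : ∀ m : ℕ, M.rsum f 0 0 m = (fun _ : ℕ => (0:X)) m := fun m => M.rsum_zero_right f m
  intro ε hε
  have := M.tendstoRN_const (atTop : Filter ℕ) (0 : X) ε hε
  refine Tendsto.congr (fun m => ?_) this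
  show P {ω | ε ≤ (M.nrm ((0:X) - 0)) ω} = P {ω | ε ≤ (M.nrm (M.rsum f 0 0 m - 0)) ω}
  rw [h m]

lemma isIntegral_unique {f : ℝ → X} {a b : ℝ} {y y' : X}
    (h1 : M.IsIntegral f a b y) (h2 : M.IsIntegral f a b y') : y = y' :=
  M.tendstoRN_unique h1 h2

lemma rsum_V_rsmul (V : ℝ → X → X) (hV : ∀ s : ℝ, 0 ≤ s → M.IsModuleHom M (V s))
    (c s : ℝ) (hs : 0 ≤ s) (m : ℕ) (z : X) :
    M.rsum (fun u => V u (M.rsmul c z)) 0 s m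
      = M.rsmul c (M.rsum (fun u => V u z) 0 s m) := by
  unfold rsum
  rw [M.rsmul_sum]
  refine Finset.sum_congr rfl fun i _ => ?_
  have hpt : (0:ℝ) ≤ 0 + (s - 0) * i / m := by
    rw [zero_add, sub_zero]
    exact div_nonneg (mul_nonneg hs (Nat.cast_nonneg i)) (Nat.cast_nonneg m)
  simp only [rsmul]
  rw [(hV _ hpt).2 (AEEqFun.const Ω c) z, ← M.mul_smul', ← M.mul_smul',
    ← const_mul', ← const_mul', mul_comm]

end RNModuleStr

namespace RNModuleStr

open ENNReal in
lemma lemF {Ω : Type*} [MeasurableSpace Ω] {P : Measure Ω} [IsProbabilityMeasure P]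
    {X : Type*} [AddCommGroup X] (M : RNModuleStr P X)
    (V : ℝ → X → X) (z : X) (s₀ : ℝ) (hs₀ : 0 ≤ s₀)
    (hloc : M.LocASBounded V)
    (hcont : M.TendstoRN (fun s => V s z) (nhdsWithin s₀ (Ici 0)) (V s₀ z))
    {ε : ℝ} (hε : 0 < ε) {a : ENNReal} (ha : 0 < a) :
    ∃ h₀ : ℝ, 0 < h₀ ∧ ∀ k : ℕ, 1 ≤ k → ∀ t : ℕ → ℝ,
      (∀ j, j < k → t j ∈ Icc s₀ (s₀ + h₀)) →
      P {ω | ε ≤ (M.nrm (M.rsmul (1/(k:ℝ))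
        (∑ j ∈ Finset.range k, V (t j) z) - V s₀ z)) ω} ≤ a := by
  by_cases htriv : 1 ≤ a
  · exact ⟨1, one_pos, fun k _ t _ => le_trans prob_le_one htriv⟩
  push_neg at htriv
  have hatop : a ≠ ⊤ := ne_top_of_lt htriv
  have ha3 : (0:ENNReal) < a/3 := ENNReal.div_pos ha.ne' (by norm_num)
  have ha3top : a/3 ≠ ⊤ := (ENNReal.div_lt_top hatop (by norm_num)).ne
  -- local bound
  obtain ⟨η, hη0, hηb⟩ := hloc (s₀ + 1) (by linarith)
  set G : Ω →ₘ[P] ℝ := η * M.nrm z + η * M.nrm z with hGdef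
  -- choose K
  have hKex : ∃ K : ℕ, P {ω | (K:ℝ) ≤ G ω} < a/3 := by
    have hmeas : ∀ K : ℕ, MeasurableSet {ω | (K:ℝ) ≤ G ω} := fun K =>
      measurableSet_le measurable_const G.measurable
    have hanti : Antitone (fun K : ℕ => {ω | (K:ℝ) ≤ G ω}) := by
      intro i j hij ω hω
      have hω' : (j:ℝ) ≤ G ω := hω
      show (i:ℝ) ≤ G ω
      exact le_trans (Nat.cast_le.mpr hij) hω'
    have hempty : (⋂ K : ℕ, {ω | (K:ℝ) ≤ G ω}) = (∅ : Set Ω) := by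
      ext ω
      simp only [Set.mem_iInter, Set.mem_setOf_eq, Set.mem_empty_iff_false, iff_false]
      push_neg
      obtain ⟨K, hK⟩ := exists_nat_gt (G ω)
      exact ⟨K, hK⟩
    have htendsto := MeasureTheory.tendsto_measure_iInter_atTop (μ := P)
        (fun K => (hmeas K).nullMeasurableSet) hanti ⟨0, measure_ne_top P _⟩
    rw [hempty, measure_empty] at htendsto
    exact (htendsto.eventually_lt_const ha3).exists
  obtain ⟨K, hK⟩ := hKex
  set Kr : ℝ := (K:ℝ) + 1 with hKr
  have hKrpos : 0 < Kr := by positivity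
  have hKless : P {ω | Kr ≤ G ω} < a/3 := by
    refine lt_of_le_of_lt (measure_mono fun ω hω => ?_) hK
    have hω' : Kr ≤ G ω := hω
    show (K:ℝ) ≤ G ω
    linarith
  -- epsilon as ENNReal
  set εE : ENNReal := ENNReal.ofReal ε with hεE
  have hεE0 : εE ≠ 0 := (ENNReal.ofReal_pos.mpr hε).ne'
  have hεEtop : εE ≠ ⊤ := ENNReal.ofReal_ne_top
  -- choose κ
  set κ : ENNReal := a/3 * εE / ENNReal.ofReal Kr with hκdef
  have hKrE0 : ENNReal.ofReal Kr ≠ 0 := (ENNReal.ofReal_pos.mpr hKrpos).ne'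
  have hKrEtop : ENNReal.ofReal Kr ≠ ⊤ := ENNReal.ofReal_ne_top
  have hκpos : 0 < κ := ENNReal.div_pos (mul_ne_zero ha3.ne' hεE0) hKrEtop
  -- choose δ
  set r : ℝ := (a/3).toReal with hrdef
  have hrpos : 0 < r := ENNReal.toReal_pos ha3.ne' ha3top
  set δ : ℝ := ε * (r/2) with hδdef
  have hδpos : 0 < δ := by positivity
  -- continuity in probability near s₀
  have hev : ∀ᶠ s in nhdsWithin s₀ (Ici 0),
      P {ω | δ ≤ (M.nrm (V s z - V s₀ z)) ω} ≤ κ :=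
    (ENNReal.tendsto_nhds_zero.mp (hcont δ hδpos)) κ hκpos
  rw [eventually_nhdsWithin_iff, Metric.eventually_nhds_iff] at hev
  obtain ⟨h₁, hh₁, hev⟩ := hev
  refine ⟨min (h₁/2) 1, by positivity, ?_⟩
  have hκs : ∀ s : ℝ, s ∈ Icc s₀ (s₀ + min (h₁/2) 1) →
      P {ω | δ ≤ (M.nrm (V s z - V s₀ z)) ω} ≤ κ := by
    intro s hs
    refine hev ?_ (le_trans hs₀ hs.1)
    rw [Real.dist_eq, abs_of_nonneg (by linarith [hs.1])]
    have := hs.2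
    have h2 : min (h₁/2) 1 ≤ h₁/2 := min_le_left _ _
    linarith
  intro k hk t ht
  have hk0 : (k:ℝ) ≠ 0 := Nat.cast_ne_zero.mpr (by omega)
  have hkpos : (0:ℝ) < (k:ℝ) := by
    have : 0 < k := by omega
    exact_mod_cast this
  set d : ℕ → X := fun j => V (t j) z - V s₀ z with hd
  have halg : M.rsmul (1/(k:ℝ)) (∑ j ∈ Finset.range k, V (t j) z) - V s₀ z
      = M.rsmul (1/(k:ℝ)) (∑ j ∈ Finset.range k, d j) := by
    have hsum : ∑ j ∈ Finset.range k, d j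
        = (∑ j ∈ Finset.range k, V (t j) z) - k • (V s₀ z) := by
      rw [Finset.sum_sub_distrib, Finset.sum_const, Finset.card_range]
    rw [hsum, M.rsmul_sub, M.rsmul_inv_nsmul (by omega)]
  rw [halg]
  have hbd1 : min (h₁/2) 1 ≤ 1 := min_le_right _ _
  have hdG : ∀ᵐ ω ∂P, ∀ j : ℕ, j < k → (M.nrm (d j)) ω ≤ G ω := by
    rw [ae_all_iff]
    intro j
    by_cases hj : j < k
    · have htj := ht j hj
      have h1 : M.nrm (V (t j) z) ≤ η * M.nrm z :=
        hηb (t j) ⟨le_trans hs₀ htj.1, le_trans htj.2 (by linarith)⟩ z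
      have h2 : M.nrm (V s₀ z) ≤ η * M.nrm z :=
        hηb s₀ ⟨hs₀, by linarith⟩ z
      filter_upwards [M.ae_nrm_add (V (t j) z) (-(V s₀ z)), AEEqFun.coeFn_le.mpr h1,
        AEEqFun.coeFn_le.mpr h2, AEEqFun.coeFn_add (η * M.nrm z) (η * M.nrm z)]
        with ω w1 w2 w3 w4
      intro _
      have hdj : d j = V (t j) z + -(V s₀ z) := by rw [hd]; abel_nf
      rw [hGdef, hdj]
      calc (M.nrm (V (t j) z + -(V s₀ z))) ω
          ≤ (M.nrm (V (t j) z)) ω + (M.nrm (-(V s₀ z))) ω := w1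
        _ = (M.nrm (V (t j) z)) ω + (M.nrm (V s₀ z)) ω := by rw [M.nrm_neg]
        _ ≤ (η * M.nrm z) ω + (η * M.nrm z) ω := add_le_add w2 w3
        _ = (η * M.nrm z + η * M.nrm z) ω := by rw [w4]; rfl
    · exact Eventually.of_forall fun ω hjk => absurd hjk hj
  have hnd0 : ∀ᵐ ω ∂P, ∀ j : ℕ, j < k → 0 ≤ (M.nrm (d j)) ω := by
    rw [ae_all_iff]
    intro j
    by_cases hj : j < k
    · exact (M.ae_nrm_nonneg (d j)).mono fun ω h => fun _ => h
    · exact Eventually.of_forall fun ω hjk => absurd hjk hj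
  have hmain : ∀ᵐ ω ∂P, (M.nrm (M.rsmul (1/(k:ℝ)) (∑ j ∈ Finset.range k, d j))) ω
      ≤ (1/(k:ℝ)) * ∑ j ∈ Finset.range k, (M.nrm (d j)) ω := by
    filter_upwards [M.ae_nrm_rsmul (1/(k:ℝ)) (∑ j ∈ Finset.range k, d j),
      M.ae_nrm_sum (Finset.range k) d] with ω w1 w2
    rw [w1, abs_of_pos (by positivity)]
    exact mul_le_mul_of_nonneg_left w2 (by positivity)
  set S1 : Set Ω := {ω | Kr ≤ G ω} with hS1
  set F : Ω → ENNReal := fun ω =>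
    ENNReal.ofReal ((1/(k:ℝ)) * ∑ j ∈ Finset.range k, min ((M.nrm (d j)) ω) Kr) with hF
  have hmeasmin : ∀ j : ℕ, Measurable (fun ω => min ((M.nrm (d j)) ω) Kr) :=
    fun j => (M.nrm (d j)).measurable.min measurable_const
  have hFmeas : Measurable F := by
    apply Measurable.ennreal_ofReal
    exact (Finset.measurable_sum _ (fun j _ => hmeasmin j)).const_mul _
  have hsplit : P {ω | ε ≤ (M.nrm (M.rsmul (1/(k:ℝ)) (∑ j ∈ Finset.range k, d j))) ω}
      ≤ P S1 + P {ω | ENNReal.ofReal ε ≤ F ω} := by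
    refine le_trans (measure_mono_ae ?_) (measure_union_le _ _)
    filter_upwards [hmain, hdG] with ω w1 w2 hω
    have hω' : ε ≤ (M.nrm (M.rsmul (1/(k:ℝ)) (∑ j ∈ Finset.range k, d j))) ω := hω
    by_cases hcase : Kr ≤ G ω
    · exact Set.mem_union_left _ hcase
    · refine Set.mem_union_right _ ?_
      show ENNReal.ofReal ε ≤ F ω
      push_neg at hcase
      have heq : ∀ j ∈ Finset.range k, min ((M.nrm (d j)) ω) Kr = (M.nrm (d j)) ω :=
        fun j hj =>
          min_eq_left (le_of_lt (lt_of_le_of_lt (w2 j (Finset.mem_range.mp hj)) hcase))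
      have hFω : F ω = ENNReal.ofReal ((1/(k:ℝ)) * ∑ j ∈ Finset.range k, (M.nrm (d j)) ω) := by
        rw [hF]
        simp only []
        rw [Finset.sum_congr rfl heq]
      rw [hFω]
      exact ENNReal.ofReal_le_ofReal (le_trans hω' w1)
  have hmarkov : P {ω | ENNReal.ofReal ε ≤ F ω} ≤ (∫⁻ ω, F ω ∂P) / εE :=
    meas_ge_le_lintegral_div hFmeas.aemeasurable hεE0 hεEtop
  have hlin : (∫⁻ ω, F ω ∂P) ≤ ENNReal.ofReal δ + ENNReal.ofReal Kr * κ := by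
    have hF_eq : ∀ᵐ ω ∂P, F ω = ENNReal.ofReal (1/(k:ℝ))
        * ∑ j ∈ Finset.range k, ENNReal.ofReal (min ((M.nrm (d j)) ω) Kr) := by
      filter_upwards [hnd0] with ω w0
      rw [hF]
      simp only []
      rw [ENNReal.ofReal_mul (by positivity), ENNReal.ofReal_sum_of_nonneg]
      intro j hj
      exact le_min (w0 j (Finset.mem_range.mp hj)) (le_of_lt hKrpos)
    have hterm : ∀ j ∈ Finset.range k,
        (∫⁻ ω, ENNReal.ofReal (min ((M.nrm (d j)) ω) Kr) ∂P)
          ≤ ENNReal.ofReal δ + ENNReal.ofReal Kr * κ := by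
      intro j hj
      have hj' := Finset.mem_range.mp hj
      set Sj : Set Ω := {ω | δ ≤ (M.nrm (d j)) ω} with hSj
      have hSjmeas : MeasurableSet Sj :=
        measurableSet_le measurable_const (M.nrm (d j)).measurable
      have hptwise : ∀ ω, ENNReal.ofReal (min ((M.nrm (d j)) ω) Kr)
          ≤ ENNReal.ofReal δ + Sj.indicator (fun _ => ENNReal.ofReal Kr) ω := by
        intro ω
        by_cases hωj : δ ≤ (M.nrm (d j)) ω
        · have hmem : ω ∈ Sj := hωj
          rw [Set.indicator_of_mem hmem]
          calc ENNReal.ofReal (min ((M.nrm (d j)) ω) Kr) ≤ ENNReal.ofReal Kr :=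
                ENNReal.ofReal_le_ofReal (min_le_right _ _)
            _ ≤ _ := le_add_self
        · push_neg at hωj
          have hmem : ω ∉ Sj := fun hc => absurd (hc : δ ≤ (M.nrm (d j)) ω) (not_le.mpr hωj)
          rw [Set.indicator_of_notMem hmem, add_zero]
          exact ENNReal.ofReal_le_ofReal (le_trans (min_le_left _ _) (le_of_lt hωj))
      calc (∫⁻ ω, ENNReal.ofReal (min ((M.nrm (d j)) ω) Kr) ∂P)
          ≤ ∫⁻ ω, (ENNReal.ofReal δ + Sj.indicator (fun _ => ENNReal.ofReal Kr) ω) ∂P :=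
            lintegral_mono hptwise
        _ = ENNReal.ofReal δ + ENNReal.ofReal Kr * P Sj := by
            rw [lintegral_add_left measurable_const, lintegral_const, measure_univ, mul_one,
              lintegral_indicator hSjmeas, setLIntegral_const]
        _ ≤ ENNReal.ofReal δ + ENNReal.ofReal Kr * κ := by
            refine add_le_add le_rfl (mul_le_mul_right ?_ _)
            exact hκs (t j) (ht j hj')
    calc (∫⁻ ω, F ω ∂P)
        = ∫⁻ ω, ENNReal.ofReal (1/(k:ℝ))
            * ∑ j ∈ Finset.range k, ENNReal.ofReal (min ((M.nrm (d j)) ω) Kr) ∂P :=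
          lintegral_congr_ae hF_eq
      _ = ENNReal.ofReal (1/(k:ℝ))
            * ∑ j ∈ Finset.range k, ∫⁻ ω, ENNReal.ofReal (min ((M.nrm (d j)) ω) Kr) ∂P := by
          rw [lintegral_const_mul _
            (Finset.measurable_sum _ (fun j _ => (hmeasmin j).ennreal_ofReal))]
          congr 1
          exact lintegral_finset_sum _ (fun j _ => (hmeasmin j).ennreal_ofReal)
      _ ≤ ENNReal.ofReal (1/(k:ℝ))
            * ∑ _j ∈ Finset.range k, (ENNReal.ofReal δ + ENNReal.ofReal Kr * κ) :=
          mul_le_mul_right (Finset.sum_le_sum hterm) _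
      _ = ENNReal.ofReal (1/(k:ℝ))
            * ((k:ENNReal) * (ENNReal.ofReal δ + ENNReal.ofReal Kr * κ)) := by
          rw [Finset.sum_const, Finset.card_range, nsmul_eq_mul]
      _ = ENNReal.ofReal δ + ENNReal.ofReal Kr * κ := by
          rw [one_div, ENNReal.ofReal_inv_of_pos hkpos, ENNReal.ofReal_natCast,
            ← mul_assoc, ENNReal.inv_mul_cancel (by exact_mod_cast hkpos.ne')
            (ENNReal.natCast_ne_top k), one_mul]
  calc P {ω | ε ≤ (M.nrm (M.rsmul (1/(k:ℝ)) (∑ j ∈ Finset.range k, d j))) ω}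
      ≤ P S1 + P {ω | ENNReal.ofReal ε ≤ F ω} := hsplit
    _ ≤ a/3 + (ENNReal.ofReal δ + ENNReal.ofReal Kr * κ)/εE :=
        add_le_add (le_of_lt hKless)
          (le_trans hmarkov (ENNReal.div_le_div_right hlin _))
    _ = a/3 + (ENNReal.ofReal δ/εE + (ENNReal.ofReal Kr * κ)/εE) := by
        rw [ENNReal.add_div]
    _ ≤ a/3 + (a/3 + a/3) := by
        refine add_le_add le_rfl (add_le_add ?_ ?_)
        · rw [hεE, ← ENNReal.ofReal_div_of_pos hε]
          have hde : δ/ε = r/2 := by rw [hδdef]; field_simp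
          rw [hde]
          calc ENNReal.ofReal (r/2) ≤ ENNReal.ofReal r :=
              ENNReal.ofReal_le_ofReal (by linarith)
            _ = a/3 := by rw [hrdef, ENNReal.ofReal_toReal ha3top]
        · rw [hκdef, mul_comm (ENNReal.ofReal Kr),
            ENNReal.div_mul_cancel hKrE0 hKrEtop, mul_div_assoc,
            ENNReal.div_self hεE0 hεEtop, mul_one]
    _ = a := by rw [← add_assoc]; exact ENNReal.add_thirds a

end RNModuleStr


/-- if `A` is a closed module homomorphism, `{V(s)}` a mild
`C`-existence family for `A`, and `s ↦ V(s)z` is differentiable at `s₀` with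
derivative `w`, then `V(s₀)z ∈ D(A)` and `A V(s₀)z = w`. -/
theorem stmt13 {Ω : Type*} [MeasurableSpace Ω] (P : Measure Ω) [IsProbabilityMeasure P]
    {X : Type*} [AddCommGroup X] (M : RNModuleStr P X)
    (V : ℝ → X → X) (C : X → X) (DA : Set X) (A : X → X)
    (hclosed : M.IsClosedOperator DA A)
    (hhomA : ∀ z ∈ DA, ∀ w ∈ DA, z + w ∈ DA ∧ A (z + w) = A z + A w)
    (hfam : IsMildCExistenceFamily M V C DA A)
    (z : X) (s₀ : ℝ) (hs₀ : 0 ≤ s₀) (w : X)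
    (hdiff : M.TendstoRN (fun s => M.rsmul (s - s₀)⁻¹ (V s z - V s₀ z))
      (nhdsWithin s₀ (Ici 0 \ {s₀})) w) :
    V s₀ z ∈ DA ∧ A (V s₀ z) = w := by
  classical
  choose yS hyI hyDA hyA using fun (s : ℝ) (hs : 0 ≤ s) => hfam.integral_mem z s hs
  have hVrs : ∀ (s c : ℝ), 0 ≤ s → V s (M.rsmul c z) = M.rsmul c (V s z) :=
    fun s c hs => (hfam.V_hom s hs).2 (AEEqFun.const Ω c) z
  have hscaled : ∀ (c s : ℝ) (hs : 0 ≤ s),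
      M.rsmul c (yS s hs) ∈ DA ∧
        A (M.rsmul c (yS s hs)) = M.rsmul c (V s z) - C (M.rsmul c z) := by
    intro c s hs
    obtain ⟨y', hI', hD', hA'⟩ := hfam.integral_mem (M.rsmul c z) s hs
    have hIc : M.IsIntegral (fun u => V u (M.rsmul c z)) 0 s (M.rsmul c (yS s hs)) := by
      have h1 := M.tendstoRN_rsmul c (hyI s hs)
      refine M.tendstoRN_congr (Eventually.of_forall fun m => ?_) h1
      exact (M.rsum_V_rsmul V hfam.V_hom c s hs m z).symm
    have heq : y' = M.rsmul c (yS s hs) := M.isIntegral_unique hI' hIc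
    rw [heq] at hD' hA'
    rw [hVrs s c hs] at hA'
    exact ⟨hD', hA'⟩
  have h0DA : (0:X) ∈ DA := by
    have h := (hscaled 0 s₀ hs₀).1
    rwa [M.zero_rsmul] at h
  have hA0 : A 0 = 0 := by
    have h := (hhomA 0 h0DA 0 h0DA).2
    rw [add_zero] at h
    exact (left_eq_add.mp h)
  have hCcancel : ∀ c : ℝ, C (M.rsmul c z) + C (M.rsmul (-c) z) = 0 := by
    intro c
    have hsum : M.rsmul c (yS s₀ hs₀) + M.rsmul (-c) (yS s₀ hs₀) = 0 := by
      rw [← M.add_rsmul, add_neg_cancel, M.zero_rsmul]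
    have h := (hhomA _ (hscaled c s₀ hs₀).1 _ (hscaled (-c) s₀ hs₀).1).2
    rw [hsum, hA0, (hscaled c s₀ hs₀).2, (hscaled (-c) s₀ hs₀).2] at h
    have h2 : M.rsmul c (V s₀ z) + M.rsmul (-c) (V s₀ z) = 0 := by
      rw [← M.add_rsmul, add_neg_cancel, M.zero_rsmul]
    have h3 : C (M.rsmul c z) + C (M.rsmul (-c) z)
        = (M.rsmul c (V s₀ z) + M.rsmul (-c) (V s₀ z))
          - ((M.rsmul c (V s₀ z) - C (M.rsmul c z))
            + (M.rsmul (-c) (V s₀ z) - C (M.rsmul (-c) z))) := by abel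
    rw [h2, ← h] at h3
    simpa using h3
  -- the approximating sequence
  set b : ℝ := if s₀ = 0 then 1 else s₀ with hb
  have hbpos : 0 < b := by
    rw [hb]; split_ifs with h
    · norm_num
    · exact lt_of_le_of_ne hs₀ (Ne.symm h)
  set hh : ℕ → ℝ := fun n => b / ((n:ℝ)+1) with hhdef
  have hhpos : ∀ n, 0 < hh n := fun n => by rw [hhdef]; positivity
  have hs' : ∀ n : ℕ, (0:ℝ) ≤ s₀ + hh n := fun n => by linarith [hhpos n]
  have hh0 : Tendsto hh atTop (nhds 0) := by
    have h1 : Tendsto (fun n : ℕ => b / (n:ℝ)) atTop (nhds 0) :=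
      tendsto_const_div_atTop_nhds_zero_nat b
    have h2 : Tendsto (fun n : ℕ => n+1) atTop atTop := tendsto_add_atTop_nat 1
    have h3 := h1.comp h2
    refine h3.congr fun n => ?_
    simp only [Function.comp_apply, hhdef]
    push_cast
    ring_nf
  set u : ℕ → X := fun n =>
    M.rsmul (hh n)⁻¹ (yS (s₀ + hh n) (hs' n)) + M.rsmul (-(hh n)⁻¹) (yS s₀ hs₀) with hu
  have hmem : ∀ n, u n ∈ DA := fun n =>
    (hhomA _ (hscaled ((hh n)⁻¹) (s₀ + hh n) (hs' n)).1
      _ (hscaled (-(hh n)⁻¹) s₀ hs₀).1).1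
  have hAu : ∀ n, A (u n) = M.rsmul (hh n)⁻¹ (V (s₀ + hh n) z - V s₀ z) := by
    intro n
    have h := (hhomA _ (hscaled ((hh n)⁻¹) (s₀ + hh n) (hs' n)).1
      _ (hscaled (-(hh n)⁻¹) s₀ hs₀).1).2
    rw [(hscaled ((hh n)⁻¹) (s₀ + hh n) (hs' n)).2,
      (hscaled (-(hh n)⁻¹) s₀ hs₀).2] at h
    rw [hu]
    rw [h, M.rsmul_sub]
    calc (M.rsmul (hh n)⁻¹ (V (s₀ + hh n) z) - C (M.rsmul (hh n)⁻¹ z))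
        + (M.rsmul (-(hh n)⁻¹) (V s₀ z) - C (M.rsmul (-(hh n)⁻¹) z))
        = (M.rsmul (hh n)⁻¹ (V (s₀ + hh n) z) + M.rsmul (-(hh n)⁻¹) (V s₀ z))
          - (C (M.rsmul (hh n)⁻¹ z) + C (M.rsmul (-(hh n)⁻¹) z)) := by abel
      _ = M.rsmul (hh n)⁻¹ (V (s₀ + hh n) z) - M.rsmul (hh n)⁻¹ (V s₀ z) := by
          rw [hCcancel, sub_zero, M.neg_rsmul, ← sub_eq_add_neg]
  -- convergence of A ∘ u to w
  have hstend : Tendsto (fun n => s₀ + hh n) atTop (nhdsWithin s₀ (Ici 0 \ {s₀})) := by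
    rw [tendsto_nhdsWithin_iff]
    constructor
    · have := tendsto_const_nhds (x := s₀) (f := atTop (α := ℕ))
      simpa using this.add hh0
    · refine Eventually.of_forall fun n => ⟨hs' n, fun heq => ?_⟩
      have heq' : s₀ + hh n = s₀ := heq
      nlinarith [hhpos n]
  have hAtend : M.TendstoRN (fun n => A (u n)) atTop w := by
    have hc := M.tendstoRN_comp hdiff hstend
    refine M.tendstoRN_congr (Eventually.of_forall fun n => ?_) hc
    show M.rsmul (s₀ + hh n - s₀)⁻¹ (V (s₀ + hh n) z - V s₀ z) = A (u n)
    rw [hAu n, add_sub_cancel_left]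
  -- per-n Riemann approximation of u n with points near s₀
  have hH : ∀ n : ℕ, M.TendstoRN (fun k : ℕ => M.rsmul (1/(k:ℝ))
      (∑ j ∈ Finset.range k, V (s₀ + (j:ℝ) * hh n / (k:ℝ)) z)) atTop (u n) := by
    intro n
    have hhne : hh n ≠ 0 := (hhpos n).ne'
    by_cases hzero : s₀ = 0
    · -- case s₀ = 0
      have hys0 : yS s₀ hs₀ = 0 := by
        refine M.isIntegral_unique (hyI s₀ hs₀) ?_
        rw [hzero]
        exact M.isIntegral_zero _
      have hun : M.rsmul (hh n)⁻¹ (yS (s₀ + hh n) (hs' n)) = u n := by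
        rw [hu]
        simp only [hys0, M.rsmul_zero'', add_zero]
      have h1 : M.TendstoRN (fun k => M.rsmul (hh n)⁻¹
          (M.rsum (fun v => V v z) 0 (s₀ + hh n) k)) atTop (u n) := by
        rw [← hun]
        exact M.tendstoRN_rsmul _ (hyI _ _)
      refine M.tendstoRN_congr ?_ h1
      filter_upwards [eventually_ge_atTop 1] with k hk
      have hk0 : (k:ℝ) ≠ 0 := Nat.cast_ne_zero.mpr (by omega)
      have he1 : s₀ + hh n = (hh n / (k:ℝ)) * ((k:ℕ):ℝ) := by
        rw [hzero]; field_simp; ring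
      rw [show M.rsum (fun v => V v z) 0 (s₀ + hh n) k
          = M.rsum (fun v => V v z) 0 ((hh n / (k:ℝ)) * ((k:ℕ):ℝ)) k by rw [← he1]]
      rw [M.rsum_eq _ _ k (by omega), M.rsmul_sum, M.rsmul_sum]
      refine Finset.sum_congr rfl fun i _ => ?_
      have hpt : (hh n / (k:ℝ)) * (i:ℝ) = s₀ + (i:ℝ) * hh n / (k:ℝ) := by
        rw [hzero, zero_add]; ring
      have hco : (hh n)⁻¹ * (hh n / (k:ℝ)) = 1/(k:ℝ) := by field_simp
      rw [M.rsmul_rsmul, hpt, hco]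
    · -- case s₀ ≠ 0
      have hbs : b = s₀ := by rw [hb]; simp [hzero]
      have hhval : hh n = s₀ / ((n:ℝ)+1) := by rw [hhdef]; simp only [hbs]
      have hn1 : ((n:ℝ)+1) ≠ 0 := by positivity
      have hm1 : Tendsto (fun k : ℕ => (n+2)*k) atTop atTop :=
        tendsto_atTop_mono (fun k => Nat.le_mul_of_pos_left k (by omega)) tendsto_id
      have hm2 : Tendsto (fun k : ℕ => (n+1)*k) atTop atTop :=
        tendsto_atTop_mono (fun k => Nat.le_mul_of_pos_left k (by omega)) tendsto_id
      have hs0pos : (0:ℝ) < s₀ := lt_of_le_of_ne hs₀ (Ne.symm hzero)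
      have t1 := M.tendstoRN_comp (hyI (s₀ + hh n) (hs' n)) hm1
      have t2 := M.tendstoRN_comp (hyI s₀ hs₀) hm2
      have hcomb := M.tendstoRN_add (M.tendstoRN_rsmul ((hh n)⁻¹) t1)
        (M.tendstoRN_rsmul (-(hh n)⁻¹) t2)
      have hulim : M.rsmul (hh n)⁻¹ (yS (s₀ + hh n) (hs' n))
          + M.rsmul (-(hh n)⁻¹) (yS s₀ hs₀) = u n := by rw [hu]
      rw [hulim] at hcomb
      refine M.tendstoRN_congr ?_ hcomb
      filter_upwards [eventually_ge_atTop 1] with k hk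
      have hk0 : (k:ℝ) ≠ 0 := Nat.cast_ne_zero.mpr (by omega)
      set st : ℝ := s₀ / (((n:ℝ)+1) * (k:ℝ)) with hst
      have he1 : s₀ + hh n = st * (((n+2)*k : ℕ):ℝ) := by
        rw [hst, hhval]; push_cast; field_simp; try ring
      have he2 : s₀ = st * (((n+1)*k : ℕ):ℝ) := by
        rw [hst]; push_cast; field_simp; try ring
      have hco : (hh n)⁻¹ * st = 1/(k:ℝ) := by
        rw [hst, hhval]; field_simp; try ring
      show M.rsmul (hh n)⁻¹ (M.rsum (fun v => V v z) 0 (s₀ + hh n) ((n+2)*k))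
          + M.rsmul (-(hh n)⁻¹) (M.rsum (fun v => V v z) 0 s₀ ((n+1)*k))
          = M.rsmul (1/(k:ℝ)) (∑ j ∈ Finset.range k, V (s₀ + (j:ℝ) * hh n / (k:ℝ)) z)
      rw [show M.rsum (fun v => V v z) 0 (s₀ + hh n) ((n+2)*k)
            = M.rsum (fun v => V v z) 0 (st * (((n+2)*k:ℕ):ℝ)) ((n+2)*k) by rw [← he1]]
      rw [show M.rsum (fun v => V v z) 0 s₀ ((n+1)*k)
            = M.rsum (fun v => V v z) 0 (st * (((n+1)*k:ℕ):ℝ)) ((n+1)*k) by rw [← he2]]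
      rw [M.rsum_eq _ _ _ (by positivity), M.rsum_eq _ _ _ (by positivity)]
      rw [M.rsmul_sum, M.rsmul_sum, M.rsmul_sum]
      simp only [M.rsmul_rsmul]
      rw [show (n+2)*k = (n+1)*k + k by ring, Finset.sum_range_add]
      have hnegterm : ∀ i : ℕ, M.rsmul (-(hh n)⁻¹ * st) (V (st * (i:ℝ)) z)
          = -(M.rsmul ((hh n)⁻¹ * st) (V (st * (i:ℝ)) z)) := by
        intro i
        rw [show -(hh n)⁻¹ * st = -((hh n)⁻¹ * st) by ring, M.neg_rsmul]
      rw [Finset.sum_congr rfl (fun i _ => hnegterm i)]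
      rw [show (∑ i ∈ Finset.range ((n+1)*k),
            -(M.rsmul ((hh n)⁻¹ * st) (V (st * (i:ℝ)) z)))
          = -(∑ i ∈ Finset.range ((n+1)*k),
            M.rsmul ((hh n)⁻¹ * st) (V (st * (i:ℝ)) z)) from Finset.sum_neg_distrib _]
      rw [show ∀ (Sa Ta : X), (Sa + Ta) + -Sa = Ta from fun Sa Ta => by abel]
      refine Finset.sum_congr rfl fun j hj => ?_
      have hpt : st * ((((n+1)*k + j : ℕ)):ℝ) = s₀ + (j:ℝ) * hh n / (k:ℝ) := by
        rw [hst, hhval]; push_cast; field_simp; try ring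
      rw [hco, hpt]
  -- convergence of u to V s₀ z
  have hDtend : M.TendstoRN u atTop (V s₀ z) := by
    intro ε hε
    rw [ENNReal.tendsto_nhds_zero]
    intro a ha
    obtain ⟨h₀, hh₀pos, hbound⟩ := lemF M V z s₀ hs₀ hfam.locBdd
      (hfam.strong_cont z s₀ hs₀) (show (0:ℝ) < ε/2 by positivity) ha
    have hev : ∀ᶠ n in atTop, hh n < h₀ := hh0.eventually_lt_const hh₀pos
    filter_upwards [hev] with n hn
    have hhalf : (0:ℝ) < ε/2 := by positivity
    have htrans := M.meas_le_of_tendstoRN (y := V s₀ z) (ε₁ := ε/2) (hH n) hhalf (δ := a) ?_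
    · rw [add_halves] at htrans
      exact htrans
    · filter_upwards [eventually_ge_atTop 1] with k hk
      refine hbound k hk (fun j => s₀ + (j:ℝ) * hh n / (k:ℝ)) (fun j hj => ?_)
      have hkpos : (0:ℝ) < (k:ℝ) := by
        have : 0 < k := by omega
        exact_mod_cast this
      have hjk : (j:ℝ) ≤ (k:ℝ) := by
        have : j ≤ k := le_of_lt hj
        exact_mod_cast this
      constructor
      · have : (0:ℝ) ≤ (j:ℝ) * hh n / (k:ℝ) := by positivity
        linarith
      · have h1 : (j:ℝ) * hh n / (k:ℝ) ≤ hh n := by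
          rw [div_le_iff₀ hkpos]
          nlinarith [hhpos n]
        linarith
  exact hclosed u (V s₀ z) w hmem hDtend hAtend
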